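/- Let U be a standard Gaussian random variable independent of the pair (Y, S), where E[Y²] < ∞ and E[S⁴] < ∞. Define the one-step QAR(1,1) updates Y′ = φ₁ Y + φ₂ S² + (1 + γ S) σ U and S′ = φ₁ S + σ U. Suppose the relevant moments are invariant under this update, namely E[S] = 0, E[S³] = 0, E[S′²] = E[S²], and E[S′ Y′] = E[S Y]. Then E[S Y] = σ²/(1 − φ₁²), Var(S) = σ²/(1 − φ₁²), and hence Cov(Y, S) = Var(S); equivalently, the population linear projection of Y onto S (with intercept) has slope one, i.e., Proj(Y | S) = E[Y] + S. -/

import Mathlib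

open MeasureTheory ProbabilityTheory Real Set

lemma gaussianPDFReal_zero_one (x : ℝ) :
    gaussianPDFReal 0 1 x = (Real.sqrt (2 * π))⁻¹ * Real.exp (-(1/2) * x ^ 2) := by
  simp only [gaussianPDFReal, NNReal.coe_one, mul_one, sub_zero]
  congr 1
  ring_nf

lemma gaussianReal_integral_eq (g : ℝ → ℝ) :
    ∫ x, g x ∂(gaussianReal 0 1) = ∫ x, gaussianPDFReal 0 1 x * g x := by
  rw [gaussianReal_of_var_ne_zero 0 one_ne_zero]
  have h : (gaussianPDF 0 1) = fun x => ((gaussianPDFReal 0 1 x).toNNReal : ENNReal) := rfl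
  rw [h, integral_withDensity_eq_integral_smul
      ((measurable_gaussianPDFReal 0 1).real_toNNReal) g]
  refine integral_congr_ae (Filter.Eventually.of_forall fun x => ?_)
  simp [NNReal.smul_def, Real.coe_toNNReal _ (gaussianPDFReal_nonneg 0 1 x)]

lemma gaussianReal_integrable_iff (g : ℝ → ℝ) :
    Integrable g (gaussianReal 0 1) ↔
      Integrable (fun x => gaussianPDFReal 0 1 x * g x) volume := by
  rw [gaussianReal_of_var_ne_zero 0 one_ne_zero]
  have h : (gaussianPDF 0 1) = fun x => ((gaussianPDFReal 0 1 x).toNNReal : ENNReal) := rfl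
  rw [h, integrable_withDensity_iff_integrable_smul
      ((measurable_gaussianPDFReal 0 1).real_toNNReal)]
  refine integrable_congr (Filter.Eventually.of_forall fun x => ?_)
  simp [NNReal.smul_def, Real.coe_toNNReal _ (gaussianPDFReal_nonneg 0 1 x)]

lemma rpow_two' (x : ℝ) : x ^ (2:ℝ) = x ^ 2 := by
  rw [show (2:ℝ) = ((2:ℕ):ℝ) by norm_num, Real.rpow_natCast]

lemma integrable_sq_mul_exp :
    Integrable (fun x : ℝ => x ^ 2 * Real.exp (-(1/2) * x ^ 2)) := by
  have h := integrable_rpow_mul_exp_neg_mul_sq (b := 1/2) (by norm_num) (s := 2) (by norm_num)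
  simpa only [rpow_two'] using h

lemma integral_sq_mul_exp :
    ∫ x : ℝ, x ^ 2 * Real.exp (-(1/2) * x ^ 2) = Real.sqrt (2 * π) := by
  have h1 : ∫ x : ℝ, x ^ 2 * Real.exp (-(1/2) * x ^ 2)
      = 2 * ∫ x in Ioi (0:ℝ), x ^ 2 * Real.exp (-(1/2) * x ^ 2) := by
    rw [← integral_comp_abs (f := fun x => x ^ 2 * Real.exp (-(1/2) * x ^ 2))]
    refine integral_congr_ae (Filter.Eventually.of_forall fun x => ?_)
    simp [sq_abs]
  have h2 : ∫ x in Ioi (0:ℝ), x ^ 2 * Real.exp (-(1/2) * x ^ 2)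
      = ((1:ℝ)/2) ^ (-((2:ℝ) + 1) / 2) * (1 / 2) * Real.Gamma (((2:ℝ) + 1) / 2) := by
    rw [← integral_rpow_mul_exp_neg_mul_rpow (p := 2) (q := 2) (b := 1/2) (by norm_num)
      (by norm_num) (by norm_num)]
    refine setIntegral_congr_fun measurableSet_Ioi fun x hx => ?_
    rw [rpow_two']
  have hΓ : Real.Gamma (((2:ℝ) + 1) / 2) = Real.sqrt π / 2 := by
    rw [show ((2:ℝ) + 1) / 2 = 1/2 + 1 by norm_num, Real.Gamma_add_one (by norm_num),
      Real.Gamma_one_half_eq]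
    ring
  have hb : ((1:ℝ)/2) ^ (-((2:ℝ) + 1) / 2) = 2 * Real.sqrt 2 := by
    rw [show ((1:ℝ)/2) = 2⁻¹ by norm_num, Real.inv_rpow (by norm_num),
      ← Real.rpow_neg (by norm_num), neg_div, neg_neg,
      show ((2:ℝ) + 1) / 2 = 1 + 1/2 by norm_num, Real.rpow_add (by norm_num),
      Real.rpow_one, ← Real.sqrt_eq_rpow]
  rw [h1, h2, hΓ, hb, Real.sqrt_mul (by norm_num)]
  ring

lemma integrable_pdf_mul_sq :
    Integrable (fun x : ℝ => gaussianPDFReal 0 1 x * x ^ 2) := by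
  have h := (integrable_sq_mul_exp).const_mul ((Real.sqrt (2 * π))⁻¹)
  refine h.congr (Filter.Eventually.of_forall fun x => ?_)
  simp only [gaussianPDFReal_zero_one]
  ring

lemma integral_pdf_mul_sq :
    ∫ x : ℝ, gaussianPDFReal 0 1 x * x ^ 2 = 1 := by
  have h : ∀ x : ℝ, gaussianPDFReal 0 1 x * x ^ 2
      = (Real.sqrt (2 * π))⁻¹ * (x ^ 2 * Real.exp (-(1/2) * x ^ 2)) := by
    intro x; rw [gaussianPDFReal_zero_one]; ring
  simp_rw [h]
  rw [integral_const_mul, integral_sq_mul_exp, inv_mul_cancel₀]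
  positivity

lemma integrable_pdf_mul_id :
    Integrable (fun x : ℝ => gaussianPDFReal 0 1 x * x) := by
  have h := (integrable_mul_exp_neg_mul_sq (b := 1/2) (by norm_num)).const_mul
    ((Real.sqrt (2 * π))⁻¹)
  refine h.congr (Filter.Eventually.of_forall fun x => ?_)
  simp only [gaussianPDFReal_zero_one]
  ring

lemma integral_pdf_mul_id :
    ∫ x : ℝ, gaussianPDFReal 0 1 x * x = 0 := by
  have h := integral_neg_eq_self (fun x => gaussianPDFReal 0 1 x * x) (volume : Measure ℝ)
  have heq : (fun x : ℝ => gaussianPDFReal 0 1 (-x) * (-x))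
      = fun x => -(gaussianPDFReal 0 1 x * x) := by
    funext x
    rw [gaussianPDFReal_zero_one, gaussianPDFReal_zero_one, neg_sq]
    ring
  rw [heq, integral_neg] at h
  linarith

set_option maxHeartbeats 1600000 in
/-- Let `U` be a standard Gaussian random variable independent of the
pair `(Y, S)` with `E[Y²] < ∞` and `E[S⁴] < ∞`.  Define the one-step QAR(1,1) updates
`Y' = φ₁ Y + φ₂ S² + (1 + γ S) σ U` and `S' = φ₁ S + σ U`.  If the relevant moments are
invariant under this update — `E[S] = 0`, `E[S³] = 0`, `E[S'²] = E[S²]`,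
`E[S' Y'] = E[S Y]` — then `E[S Y] = σ²/(1 − φ₁²)`, `Var(S) = σ²/(1 − φ₁²)`, hence
`Cov(Y, S) = Var(S)`: the population linear projection of `Y` onto `S` (with intercept)
has slope one, i.e. `Proj(Y | S) = E[Y] + S`. -/
theorem qar_projection_identity
    {Ω : Type*} [MeasurableSpace Ω] (P : Measure Ω) [IsProbabilityMeasure P]
    (φ1 φ2 γ σ : ℝ) (hφ1 : |φ1| < 1)
    (Y S U : Ω → ℝ)
    (hYmeas : Measurable Y) (hSmeas : Measurable S) (hUmeas : Measurable U)
    (hUdist : Measure.map U P = gaussianReal 0 1)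
    (hindep : IndepFun (fun ω => (Y ω, S ω)) U P)
    (hY2 : Integrable (fun ω => (Y ω) ^ 2) P)
    (hS4 : Integrable (fun ω => (S ω) ^ 4) P)
    (hSmean : ∫ ω, S ω ∂P = 0)
    (hS3 : ∫ ω, (S ω) ^ 3 ∂P = 0)
    (hS'2 : ∫ ω, (φ1 * S ω + σ * U ω) ^ 2 ∂P = ∫ ω, (S ω) ^ 2 ∂P)
    (hS'Y' : ∫ ω, (φ1 * S ω + σ * U ω)
        * (φ1 * Y ω + φ2 * (S ω) ^ 2 + (1 + γ * S ω) * σ * U ω) ∂P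
      = ∫ ω, S ω * Y ω ∂P) :
    (∫ ω, S ω * Y ω ∂P) = σ ^ 2 / (1 - φ1 ^ 2)
    ∧ (∫ ω, (S ω) ^ 2 ∂P) - (∫ ω, S ω ∂P) ^ 2 = σ ^ 2 / (1 - φ1 ^ 2)
    ∧ (∫ ω, S ω * Y ω ∂P) - (∫ ω, S ω ∂P) * (∫ ω, Y ω ∂P)
        = (∫ ω, (S ω) ^ 2 ∂P) - (∫ ω, S ω ∂P) ^ 2
    ∧ ∀ c d : ℝ,
        ∫ ω, (Y ω - ((∫ ω', Y ω' ∂P) + S ω)) ^ 2 ∂P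
          ≤ ∫ ω, (Y ω - (c + d * S ω)) ^ 2 ∂P := by
  have hUae : AEMeasurable U P := hUmeas.aemeasurable
  -- moments of U
  have hUint : Integrable U P := by
    have h1 : Integrable (fun x : ℝ => x) (gaussianReal 0 1) :=
      (gaussianReal_integrable_iff _).2 integrable_pdf_mul_id
    rw [← hUdist] at h1
    exact (integrable_map_measure aestronglyMeasurable_id hUae).1 h1
  have hU2int : Integrable (fun ω => U ω ^ 2) P := by
    have h1 : Integrable (fun x : ℝ => x ^ 2) (gaussianReal 0 1) :=
      (gaussianReal_integrable_iff _).2 integrable_pdf_mul_sq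
    rw [← hUdist] at h1
    exact (integrable_map_measure ((measurable_id.pow_const 2).aestronglyMeasurable)
      hUae).1 h1
  have hEU : ∫ ω, U ω ∂P = 0 := by
    have h := integral_map (f := fun x : ℝ => x) hUae aestronglyMeasurable_id
    rw [hUdist, gaussianReal_integral_eq, integral_pdf_mul_id] at h
    exact h.symm
  have hEU2 : ∫ ω, U ω ^ 2 ∂P = 1 := by
    have h := integral_map (f := fun x : ℝ => x ^ 2) hUae
      ((measurable_id.pow_const 2).aestronglyMeasurable)
    rw [hUdist, gaussianReal_integral_eq, integral_pdf_mul_sq] at h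
    exact h.symm
  -- independence consequences
  have hSU : IndepFun S U P := hindep.comp measurable_snd measurable_id
  have hYU : IndepFun Y U P := hindep.comp measurable_fst measurable_id
  have hS2U : IndepFun (fun ω => S ω ^ 2) U P :=
    hindep.comp (measurable_snd.pow_const 2) measurable_id
  have hSU2 : IndepFun S (fun ω => U ω ^ 2) P :=
    hSU.comp measurable_id (measurable_id.pow_const 2)
  have hESU : ∫ ω, S ω * U ω ∂P = 0 := by
    have h := hSU.integral_mul_eq_mul_integral hSmeas.aestronglyMeasurable hUmeas.aestronglyMeasurable
    simpa [Pi.mul_apply, hEU] using h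
  have hEYU : ∫ ω, Y ω * U ω ∂P = 0 := by
    have h := hYU.integral_mul_eq_mul_integral hYmeas.aestronglyMeasurable hUmeas.aestronglyMeasurable
    simpa [Pi.mul_apply, hEU] using h
  have hES2U : ∫ ω, S ω ^ 2 * U ω ∂P = 0 := by
    have h := hS2U.integral_mul_eq_mul_integral (hSmeas.pow_const 2).aestronglyMeasurable
      hUmeas.aestronglyMeasurable
    simpa [Pi.mul_apply, hEU] using h
  have hESU2 : ∫ ω, S ω * U ω ^ 2 ∂P = 0 := by
    have h := hSU2.integral_mul_eq_mul_integral hSmeas.aestronglyMeasurable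
      (hUmeas.pow_const 2).aestronglyMeasurable
    simpa [Pi.mul_apply, hSmean] using h
  -- integrability of the various moments
  have hb1 : Integrable (fun ω => 1 + S ω ^ 4) P := (integrable_const (1:ℝ)).add hS4
  have hb2 : Integrable (fun ω => 1 + Y ω ^ 2) P := (integrable_const (1:ℝ)).add hY2
  have hb3 : Integrable (fun ω => (1 + S ω ^ 4) + Y ω ^ 2) P := hb1.add hY2
  have hSint : Integrable S P := by
    refine Integrable.mono' hb1
      hSmeas.aestronglyMeasurable (Filter.Eventually.of_forall fun ω => ?_)
    rw [Real.norm_eq_abs, abs_le]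
    constructor <;> nlinarith [sq_nonneg (S ω - 1), sq_nonneg (S ω + 1),
      sq_nonneg (S ω ^ 2 - 1), sq_nonneg (S ω), sq_nonneg (S ω ^ 2)]
  have hS2int : Integrable (fun ω => S ω ^ 2) P := by
    refine Integrable.mono' hb1
      (hSmeas.pow_const 2).aestronglyMeasurable (Filter.Eventually.of_forall fun ω => ?_)
    rw [Real.norm_eq_abs, abs_le]
    constructor <;> nlinarith [sq_nonneg (S ω ^ 2 - 1), sq_nonneg (S ω), sq_nonneg (S ω ^ 2)]
  have hS3int : Integrable (fun ω => S ω ^ 3) P := by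
    refine Integrable.mono' hb1
      (hSmeas.pow_const 3).aestronglyMeasurable (Filter.Eventually.of_forall fun ω => ?_)
    rw [Real.norm_eq_abs, abs_le]
    constructor <;> nlinarith [sq_nonneg (S ω ^ 2 - S ω), sq_nonneg (S ω ^ 2 + S ω),
      sq_nonneg (S ω ^ 2 - 1), sq_nonneg (S ω - 1), sq_nonneg (S ω + 1), sq_nonneg (S ω)]
  have hYint : Integrable Y P := by
    refine Integrable.mono' hb2
      hYmeas.aestronglyMeasurable (Filter.Eventually.of_forall fun ω => ?_)
    rw [Real.norm_eq_abs, abs_le]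
    constructor <;> nlinarith [sq_nonneg (Y ω - 1), sq_nonneg (Y ω + 1)]
  have hSYint : Integrable (fun ω => S ω * Y ω) P := by
    refine Integrable.mono' hb3
      (hSmeas.mul hYmeas).aestronglyMeasurable (Filter.Eventually.of_forall fun ω => ?_)
    rw [Real.norm_eq_abs, abs_le]
    constructor <;> nlinarith [sq_nonneg (S ω - Y ω), sq_nonneg (S ω + Y ω),
      sq_nonneg (S ω ^ 2 - 1), sq_nonneg (S ω), sq_nonneg (S ω ^ 2)]
  have hSUint : Integrable (fun ω => S ω * U ω) P := hSU.integrable_mul hSint hUint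
  have hYUint : Integrable (fun ω => Y ω * U ω) P := hYU.integrable_mul hYint hUint
  have hS2Uint : Integrable (fun ω => S ω ^ 2 * U ω) P := hS2U.integrable_mul hS2int hUint
  have hSU2int : Integrable (fun ω => S ω * U ω ^ 2) P := hSU2.integrable_mul hSint hU2int
  -- 1 - φ1 ^ 2 > 0
  have hpos : 0 < 1 - φ1 ^ 2 := by nlinarith [sq_abs φ1, abs_nonneg φ1]
  -- first moment equation
  have hexp1 : ∫ ω, (φ1 * S ω + σ * U ω) ^ 2 ∂P
      = φ1 ^ 2 * ∫ ω, S ω ^ 2 ∂P + (2 * φ1 * σ) * ∫ ω, S ω * U ω ∂P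
        + σ ^ 2 * ∫ ω, U ω ^ 2 ∂P := by
    have i1 : Integrable (fun ω => (2 * φ1 * σ) * (S ω * U ω) + σ ^ 2 * U ω ^ 2) P :=
      (hSUint.const_mul _).add (hU2int.const_mul _)
    have h : (fun ω => (φ1 * S ω + σ * U ω) ^ 2)
        = fun ω => φ1 ^ 2 * S ω ^ 2 + ((2 * φ1 * σ) * (S ω * U ω) + σ ^ 2 * U ω ^ 2) := by
      funext ω; ring
    rw [h, integral_add (hS2int.const_mul _) i1,
      integral_add (hSUint.const_mul _) (hU2int.const_mul _),
      integral_const_mul, integral_const_mul, integral_const_mul]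
    ring
  have hm2 : ∫ ω, S ω ^ 2 ∂P = σ ^ 2 / (1 - φ1 ^ 2) := by
    have h := hS'2
    rw [hexp1, hESU, hEU2] at h
    rw [eq_div_iff hpos.ne']
    linear_combination -h
  -- second moment equation
  have hexp2 : ∫ ω, (φ1 * S ω + σ * U ω)
        * (φ1 * Y ω + φ2 * S ω ^ 2 + (1 + γ * S ω) * σ * U ω) ∂P
      = φ1 ^ 2 * ∫ ω, S ω * Y ω ∂P + (φ1 * φ2) * ∫ ω, S ω ^ 3 ∂P
        + (φ1 * σ) * ∫ ω, S ω * U ω ∂P + (φ1 * γ * σ + σ * φ2) * ∫ ω, S ω ^ 2 * U ω ∂P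
        + (φ1 * σ) * ∫ ω, Y ω * U ω ∂P + σ ^ 2 * ∫ ω, U ω ^ 2 ∂P
        + (γ * σ ^ 2) * ∫ ω, S ω * U ω ^ 2 ∂P := by
    have j6 : Integrable (fun ω => σ ^ 2 * U ω ^ 2 + (γ * σ ^ 2) * (S ω * U ω ^ 2)) P :=
      (hU2int.const_mul _).add (hSU2int.const_mul _)
    have j5 : Integrable (fun ω => (φ1 * σ) * (Y ω * U ω)
        + (σ ^ 2 * U ω ^ 2 + (γ * σ ^ 2) * (S ω * U ω ^ 2))) P :=
      (hYUint.const_mul _).add j6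
    have j4 : Integrable (fun ω => (φ1 * γ * σ + σ * φ2) * (S ω ^ 2 * U ω)
        + ((φ1 * σ) * (Y ω * U ω)
          + (σ ^ 2 * U ω ^ 2 + (γ * σ ^ 2) * (S ω * U ω ^ 2)))) P :=
      (hS2Uint.const_mul _).add j5
    have j3 : Integrable (fun ω => (φ1 * σ) * (S ω * U ω)
        + ((φ1 * γ * σ + σ * φ2) * (S ω ^ 2 * U ω)
          + ((φ1 * σ) * (Y ω * U ω)
            + (σ ^ 2 * U ω ^ 2 + (γ * σ ^ 2) * (S ω * U ω ^ 2))))) P :=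
      (hSUint.const_mul _).add j4
    have j2 : Integrable (fun ω => (φ1 * φ2) * S ω ^ 3
        + ((φ1 * σ) * (S ω * U ω)
          + ((φ1 * γ * σ + σ * φ2) * (S ω ^ 2 * U ω)
            + ((φ1 * σ) * (Y ω * U ω)
              + (σ ^ 2 * U ω ^ 2 + (γ * σ ^ 2) * (S ω * U ω ^ 2)))))) P :=
      (hS3int.const_mul _).add j3
    have h : (fun ω => (φ1 * S ω + σ * U ω)
          * (φ1 * Y ω + φ2 * S ω ^ 2 + (1 + γ * S ω) * σ * U ω))
        = fun ω => φ1 ^ 2 * (S ω * Y ω) + ((φ1 * φ2) * S ω ^ 3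
          + ((φ1 * σ) * (S ω * U ω) + ((φ1 * γ * σ + σ * φ2) * (S ω ^ 2 * U ω)
          + ((φ1 * σ) * (Y ω * U ω) + (σ ^ 2 * U ω ^ 2
          + (γ * σ ^ 2) * (S ω * U ω ^ 2)))))) := by
      funext ω; ring
    rw [h, integral_add (hSYint.const_mul _) j2,
      integral_add (hS3int.const_mul _) j3,
      integral_add (hSUint.const_mul _) j4,
      integral_add (hS2Uint.const_mul _) j5,
      integral_add (hYUint.const_mul _) j6,
      integral_add (hU2int.const_mul _) (hSU2int.const_mul _),
      integral_const_mul, integral_const_mul, integral_const_mul, integral_const_mul,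
      integral_const_mul, integral_const_mul, integral_const_mul]
    ring
  have hmSY : ∫ ω, S ω * Y ω ∂P = σ ^ 2 / (1 - φ1 ^ 2) := by
    have h := hS'Y'
    rw [hexp2, hESU, hEU2, hES2U, hEYU, hESU2, hS3] at h
    rw [eq_div_iff hpos.ne']
    linear_combination -h
  refine ⟨hmSY, ?_, ?_, ?_⟩
  · rw [hSmean, hm2]; ring
  · rw [hSmean, hmSY, hm2]; ring
  · intro c d
    set m := ∫ ω, Y ω ∂P with hm
    have key : ∀ a b : ℝ, ∫ ω, (Y ω - (a + b * S ω)) ^ 2 ∂P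
        = (∫ ω, Y ω ^ 2 ∂P) + a ^ 2 + b ^ 2 * (∫ ω, S ω ^ 2 ∂P)
          + 2 * a * b * (∫ ω, S ω ∂P) - 2 * a * m - 2 * b * (∫ ω, S ω * Y ω ∂P) := by
      intro a b
      have k5 : Integrable (fun ω => (-(2 * a)) * Y ω + (-(2 * b)) * (S ω * Y ω)) P :=
        (hYint.const_mul _).add (hSYint.const_mul _)
      have k4 : Integrable (fun ω => (2 * a * b) * S ω
          + ((-(2 * a)) * Y ω + (-(2 * b)) * (S ω * Y ω))) P :=
        (hSint.const_mul _).add ((hYint.const_mul _).add (hSYint.const_mul _))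
      have k3 : Integrable (fun ω => b ^ 2 * S ω ^ 2 + ((2 * a * b) * S ω
          + ((-(2 * a)) * Y ω + (-(2 * b)) * (S ω * Y ω)))) P :=
        (hS2int.const_mul _).add k4
      have k2 : Integrable (fun ω => (a ^ 2 : ℝ) + (b ^ 2 * S ω ^ 2 + ((2 * a * b) * S ω
          + ((-(2 * a)) * Y ω + (-(2 * b)) * (S ω * Y ω))))) P :=
        (integrable_const _).add k3
      have h : (fun ω => (Y ω - (a + b * S ω)) ^ 2)
          = fun ω => Y ω ^ 2 + ((a ^ 2 : ℝ) + (b ^ 2 * S ω ^ 2 + ((2 * a * b) * S ω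
            + ((-(2 * a)) * Y ω + (-(2 * b)) * (S ω * Y ω))))) := by
        funext ω; ring
      rw [h, integral_add hY2 k2, integral_add (integrable_const _) k3,
        integral_add (hS2int.const_mul _) k4,
        integral_add (hSint.const_mul _) k5,
        integral_add (hYint.const_mul _) (hSYint.const_mul _),
        integral_const, integral_const_mul, integral_const_mul, integral_const_mul,
        integral_const_mul]
      simp only [measure_univ, probReal_univ, ENNReal.toReal_one, smul_eq_mul, one_mul]
      ring
    have hV : 0 ≤ ∫ ω, S ω ^ 2 ∂P := integral_nonneg fun ω => sq_nonneg _
    have h1 : (fun ω => (Y ω - (m + S ω)) ^ 2) = fun ω => (Y ω - (m + 1 * S ω)) ^ 2 := by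
      funext ω; ring
    rw [h1, key m 1, key c d, hSmean, hmSY, hm2]
    nlinarith [sq_nonneg (c - m), sq_nonneg (d - 1),
      mul_nonneg (div_nonneg (sq_nonneg σ) hpos.le) (sq_nonneg (d - 1))]
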